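/- The function g_{1/2}(x) = (4πx³)^{−1/2} exp(−1/(4x)) on (0,∞) has Laplace transform ∫_0^∞ e^{−sx} g_{1/2}(x) dx = e^{−√s} for all s > 0. -/

import Mathlib

open Real MeasureTheory Set

lemma image_inv_mul (c : ℝ) (hc : 0 < c) : (fun u : ℝ => c / u) '' Ioi 0 = Ioi 0 := by
  ext v
  constructor
  · rintro ⟨u, hu, rfl⟩
    exact div_pos hc hu
  · intro hv
    exact ⟨c / v, div_pos hc hv, by field_simp⟩

lemma image_glasser (c : ℝ) (hc : 0 < c) :
    (fun u : ℝ => u - c / u) '' Ioi 0 = univ := by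
  apply eq_univ_of_forall
  intro v
  set w := Real.sqrt (v ^ 2 + 4 * c) with hw
  have hw2 : w ^ 2 = v ^ 2 + 4 * c := Real.sq_sqrt (by nlinarith [sq_nonneg v])
  have hwv : -v < w := by
    nlinarith [Real.sqrt_nonneg (v ^ 2 + 4 * c), sq_nonneg (w + v)]
  have hu : (0:ℝ) < (v + w) / 2 := by linarith
  have hne : v + w ≠ 0 := by linarith
  refine ⟨(v + w) / 2, hu, ?_⟩
  field_simp
  nlinarith

lemma image_quarter : (fun u : ℝ => 1 / (4 * u ^ 2)) '' Ioi 0 = Ioi 0 := by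
  ext x
  constructor
  · rintro ⟨u, hu, rfl⟩
    have hu' : (0:ℝ) < u := hu
    exact div_pos one_pos (mul_pos (by norm_num) (pow_pos hu' 2))
  · intro hx
    have hx' : (0:ℝ) < x := hx
    have hs : (0:ℝ) < Real.sqrt x := Real.sqrt_pos.mpr hx'
    refine ⟨1 / (2 * Real.sqrt x), div_pos one_pos (by positivity : (0:ℝ) < 2 * Real.sqrt x), ?_⟩
    have h : Real.sqrt x ^ 2 = x := Real.sq_sqrt (le_of_lt hx')
    field_simp
    nlinarith

lemma inj_inv_mul (c : ℝ) (hc : 0 < c) : Set.InjOn (fun u : ℝ => c / u) (Ioi 0) := by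
  have : StrictAntiOn (fun u : ℝ => c / u) (Ioi 0) := by
    intro a ha b hb hab
    exact div_lt_div_of_pos_left hc ha.out hab
  exact this.injOn

lemma inj_glasser (c : ℝ) (hc : 0 < c) : Set.InjOn (fun u : ℝ => u - c / u) (Ioi 0) := by
  have : StrictMonoOn (fun u : ℝ => u - c / u) (Ioi 0) := by
    intro a ha b hb hab
    have := div_lt_div_of_pos_left hc ha.out hab
    simp only
    linarith
  exact this.injOn

lemma deriv_inv_mul (c u : ℝ) (hu : 0 < u) :
    HasDerivAt (fun u : ℝ => c / u) (-(c / u ^ 2)) u := by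
  have h := (hasDerivAt_inv (ne_of_gt hu)).const_mul c
  simpa [div_eq_mul_inv, neg_div, mul_div_assoc] using h

lemma deriv_glasser (c u : ℝ) (hu : 0 < u) :
    HasDerivAt (fun u : ℝ => u - c / u) (1 + c / u ^ 2) u := by
  have h := (hasDerivAt_id' u).sub (deriv_inv_mul c u hu)
  exact h.congr_deriv (by ring)

lemma measA (c : ℝ) : Measurable (fun u : ℝ => Real.exp (-(u - c / u) ^ 2)) := by
  have h1 : Measurable (fun u : ℝ => u - c / u) :=
    measurable_id.sub (measurable_const.div measurable_id)
  exact Real.measurable_exp.comp ((h1.pow_const 2).neg)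

lemma glasser (c : ℝ) (hc : 0 < c) :
    ∫ u in Ioi (0:ℝ), Real.exp (-(u - c / u) ^ 2) = Real.sqrt π / 2 := by
  set g : ℝ → ℝ := fun v => Real.exp (-v ^ 2) with hg
  -- substitution v = u - c/u
  have key : ∫ v : ℝ, g v =
      ∫ u in Ioi (0:ℝ), |1 + c / u ^ 2| • g (u - c / u) := by
    rw [← MeasureTheory.setIntegral_univ, ← image_glasser c hc]
    exact integral_image_eq_integral_abs_deriv_smul measurableSet_Ioi
      (fun u hu => (deriv_glasser c u hu).hasDerivWithinAt) (inj_glasser c hc) g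
  -- substitution u ↦ c/u
  have key2 : ∫ u in Ioi (0:ℝ), g (u - c / u) =
      ∫ u in Ioi (0:ℝ), |(-(c / u ^ 2))| • g (c / u - c / (c / u)) := by
    conv_lhs => rw [← image_inv_mul c hc]
    exact integral_image_eq_integral_abs_deriv_smul measurableSet_Ioi
      (fun u hu => (deriv_inv_mul c u hu).hasDerivWithinAt) (inj_inv_mul c hc) _
  -- identify key2's RHS with (c/u^2) * g (u - c/u)
  have e2 : ∀ u ∈ Ioi (0:ℝ), |(-(c / u ^ 2))| • g (c / u - c / (c / u)) =
      (c / u ^ 2) * g (u - c / u) := by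
    intro u hu
    have hu' : (0:ℝ) < u := hu
    have h1 : c / (c / u) = u := by field_simp
    have h2 : |(-(c / u ^ 2))| = c / u ^ 2 := by
      rw [abs_neg, abs_of_pos (div_pos hc (by positivity))]
    rw [h1, h2, smul_eq_mul, hg]
    ring_nf
  have key2' : ∫ u in Ioi (0:ℝ), g (u - c / u) =
      ∫ u in Ioi (0:ℝ), (c / u ^ 2) * g (u - c / u) := by
    rw [key2]
    exact setIntegral_congr_fun measurableSet_Ioi e2
  -- integrability
  have hgint : Integrable g := by
    have := integrable_exp_neg_mul_sq (b := 1) one_pos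
    simpa [hg] using this
  have hT : IntegrableOn (fun u => (1 + c / u ^ 2) * g (u - c / u)) (Ioi (0:ℝ)) := by
    have := (integrableOn_image_iff_integrableOn_abs_deriv_smul measurableSet_Ioi
      (fun u (hu : u ∈ Ioi (0:ℝ)) => (deriv_glasser c u hu).hasDerivWithinAt)
      (inj_glasser c hc) g).mp (by rw [image_glasser c hc]; exact hgint.integrableOn)
    refine this.congr_fun ?_ measurableSet_Ioi
    intro u hu
    have hu' : (0:ℝ) < u := hu
    simp only [smul_eq_mul]
    rw [abs_of_pos (by positivity : (0:ℝ) < 1 + c / u ^ 2)]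
  have hmeasA : AEStronglyMeasurable (fun u : ℝ => g (u - c / u))
      (volume.restrict (Ioi (0:ℝ))) := by
    exact (measA c).aestronglyMeasurable
  have hmeasB : AEStronglyMeasurable (fun u : ℝ => (c / u ^ 2) * g (u - c / u))
      (volume.restrict (Ioi (0:ℝ))) := by
    exact ((measurable_const.div (measurable_id.pow_const 2)).mul (measA c)).aestronglyMeasurable
  have hbound : ∀ u ∈ Ioi (0:ℝ), (0:ℝ) ≤ c / u ^ 2 ∧ (0:ℝ) ≤ g (u - c / u) := by
    intro u hu
    have hu' : (0:ℝ) < u := hu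
    exact ⟨le_of_lt (div_pos hc (by positivity)), le_of_lt (Real.exp_pos _)⟩
  have hA : IntegrableOn (fun u : ℝ => g (u - c / u)) (Ioi (0:ℝ)) := by
    refine hT.mono' hmeasA ?_
    rw [ae_restrict_iff' measurableSet_Ioi]
    filter_upwards with u hu
    obtain ⟨h1, h2⟩ := hbound u hu
    rw [Real.norm_eq_abs, abs_of_nonneg h2]
    nlinarith
  have hB : IntegrableOn (fun u : ℝ => (c / u ^ 2) * g (u - c / u)) (Ioi (0:ℝ)) := by
    refine hT.mono' hmeasB ?_
    rw [ae_restrict_iff' measurableSet_Ioi]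
    filter_upwards with u hu
    obtain ⟨h1, h2⟩ := hbound u hu
    rw [Real.norm_eq_abs, abs_of_nonneg (mul_nonneg h1 h2)]
    nlinarith
  have split : ∫ u in Ioi (0:ℝ), (1 + c / u ^ 2) * g (u - c / u) =
      (∫ u in Ioi (0:ℝ), g (u - c / u)) +
      ∫ u in Ioi (0:ℝ), (c / u ^ 2) * g (u - c / u) := by
    rw [← integral_add hA hB]
    congr 1 with u
    ring
  have habs : ∫ u in Ioi (0:ℝ), |1 + c / u ^ 2| • g (u - c / u) =
      ∫ u in Ioi (0:ℝ), (1 + c / u ^ 2) * g (u - c / u) := by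
    refine setIntegral_congr_fun measurableSet_Ioi ?_
    intro u hu
    have hu' : (0:ℝ) < u := hu
    simp only [smul_eq_mul]
    rw [abs_of_pos (by positivity : (0:ℝ) < 1 + c / u ^ 2)]
  have hgauss : ∫ v : ℝ, g v = Real.sqrt π := by
    have := integral_gaussian 1
    simpa [hg] using this
  have final : Real.sqrt π = 2 * ∫ u in Ioi (0:ℝ), g (u - c / u) := by
    rw [← hgauss, key, habs, split, ← key2']
    ring
  have : ∫ u in Ioi (0:ℝ), g (u - c / u) = Real.sqrt π / 2 := by linarith
  simpa [hg] using this

/-- The density of the standard stable subordinator of index 1/2. -/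
noncomputable def stableDensityHalf (x : ℝ) : ℝ :=
  (1 / Real.sqrt (4 * π * x ^ 3)) * Real.exp (-1 / (4 * x))

lemma deriv_quarter (u : ℝ) (hu : 0 < u) :
    HasDerivAt (fun u : ℝ => 1 / (4 * u ^ 2)) (-(1 / (2 * u ^ 3))) u := by
  have h4 : 4 * u ^ 2 ≠ 0 := by positivity
  have h := ((hasDerivAt_pow 2 u).const_mul 4).inv h4
  have hfe : (fun u : ℝ => 1 / (4 * u ^ 2)) = fun u : ℝ => (4 * u ^ 2)⁻¹ := by
    funext v; rw [one_div]
  rw [hfe]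
  refine h.congr_deriv ?_
  field_simp
  ring

lemma inj_quarter : Set.InjOn (fun u : ℝ => 1 / (4 * u ^ 2)) (Ioi 0) := by
  have : StrictAntiOn (fun u : ℝ => 1 / (4 * u ^ 2)) (Ioi 0) := by
    intro a ha b hb hab
    have ha' : (0:ℝ) < a := ha
    exact div_lt_div_of_pos_left one_pos (by positivity) (by nlinarith)
  exact this.injOn

theorem half_stable_density_laplace (s : ℝ) (hs : 0 < s) :
    ∫ x in Set.Ioi (0:ℝ), Real.exp (-(s * x)) * stableDensityHalf x =
      Real.exp (-Real.sqrt s) := by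
  set c : ℝ := Real.sqrt s / 2 with hc
  have hsc : (0:ℝ) < c := by positivity
  have hss : Real.sqrt s ^ 2 = s := Real.sq_sqrt hs.le
  have hπ : (0:ℝ) < Real.sqrt π := Real.sqrt_pos.mpr pi_pos
  have key : ∫ x in Set.Ioi (0:ℝ), Real.exp (-(s * x)) * stableDensityHalf x =
      ∫ u in Ioi (0:ℝ), |(-(1 / (2 * u ^ 3)))| •
        (Real.exp (-(s * (1 / (4 * u ^ 2)))) * stableDensityHalf (1 / (4 * u ^ 2))) := by
    conv_lhs => rw [← image_quarter]
    exact integral_image_eq_integral_abs_deriv_smul measurableSet_Ioi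
      (fun u hu => (deriv_quarter u hu).hasDerivWithinAt) inj_quarter _
  rw [key]
  have congr1 : ∀ u ∈ Ioi (0:ℝ), |(-(1 / (2 * u ^ 3)))| •
      (Real.exp (-(s * (1 / (4 * u ^ 2)))) * stableDensityHalf (1 / (4 * u ^ 2))) =
      (2 / Real.sqrt π * Real.exp (-Real.sqrt s)) * Real.exp (-(u - c / u) ^ 2) := by
    intro u hu
    have hu' : (0:ℝ) < u := hu
    have habs : |(-(1 / (2 * u ^ 3)))| = 1 / (2 * u ^ 3) := by
      rw [abs_neg, abs_of_pos (by positivity)]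
    have hsqrt : Real.sqrt (4 * π * (1 / (4 * u ^ 2)) ^ 3) = Real.sqrt π * (1 / (4 * u ^ 3)) := by
      have h1 : 4 * π * (1 / (4 * u ^ 2)) ^ 3 = π * (1 / (4 * u ^ 3)) ^ 2 := by
        field_simp
      rw [h1, Real.sqrt_mul pi_pos.le, Real.sqrt_sq (by positivity)]
    have hinv : -1 / (4 * (1 / (4 * u ^ 2))) = -u ^ 2 := by
      field_simp
    have hsd : stableDensityHalf (1 / (4 * u ^ 2)) = (4 * u ^ 3 / Real.sqrt π) * Real.exp (-u ^ 2) := by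
      rw [stableDensityHalf, hsqrt, hinv]
      have : (1:ℝ) / (Real.sqrt π * (1 / (4 * u ^ 3))) = 4 * u ^ 3 / Real.sqrt π := by
        field_simp
      rw [this]
    have harg : -(s * (1 / (4 * u ^ 2))) + -u ^ 2 = -Real.sqrt s + -(u - c / u) ^ 2 := by
      have hcu : c / u = Real.sqrt s / (2 * u) := by rw [hc]; ring
      rw [hcu]
      field_simp
      ring_nf
      nlinarith [hss]
    have hexp : Real.exp (-(s * (1 / (4 * u ^ 2)))) * Real.exp (-u ^ 2) =
        Real.exp (-Real.sqrt s) * Real.exp (-(u - c / u) ^ 2) := by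
      rw [← Real.exp_add, ← Real.exp_add, harg]
    rw [habs, smul_eq_mul, hsd]
    calc (1 / (2 * u ^ 3)) * (Real.exp (-(s * (1 / (4 * u ^ 2)))) *
          ((4 * u ^ 3 / Real.sqrt π) * Real.exp (-u ^ 2)))
        = (2 / Real.sqrt π) * (Real.exp (-(s * (1 / (4 * u ^ 2)))) * Real.exp (-u ^ 2)) := by
          field_simp; ring
      _ = (2 / Real.sqrt π) * (Real.exp (-Real.sqrt s) * Real.exp (-(u - c / u) ^ 2)) := by
          rw [hexp]
      _ = 2 / Real.sqrt π * Real.exp (-Real.sqrt s) * Real.exp (-(u - c / u) ^ 2) := by ring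
  rw [setIntegral_congr_fun measurableSet_Ioi congr1]
  rw [MeasureTheory.integral_const_mul, glasser c hsc]
  field_simp
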